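/- For any prime p and integers k ≥ ℓ ≥ 0, the Gaussian binomial coefficient satisfies p^(ℓ(k-ℓ)) ≤ [k choose ℓ]_p ≤ p^(ℓ(k-ℓ))·(1 + 6/p). -/

import Mathlib

/-- Weierstrass-type inequality: `∏ (1 - f i) ≥ 1 - ∑ f i` for `0 ≤ f i ≤ 1`. -/
lemma aux_one_sub_sum_le_prod (s : Finset ℕ) (f : ℕ → ℝ)
    (h0 : ∀ i ∈ s, 0 ≤ f i) (h1 : ∀ i ∈ s, f i ≤ 1) :
    1 - ∑ i ∈ s, f i ≤ ∏ i ∈ s, (1 - f i) := by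
  induction s using Finset.cons_induction with
  | empty => simp
  | cons a s' hx ih =>
    rw [Finset.sum_cons, Finset.prod_cons]
    have ih' := ih (fun i hi => h0 i (Finset.mem_cons_of_mem hi))
      (fun i hi => h1 i (Finset.mem_cons_of_mem hi))
    have ha0 : 0 ≤ f a := h0 a (Finset.mem_cons_self a s')
    have ha1 : f a ≤ 1 := h1 a (Finset.mem_cons_self a s')
    have hsum : 0 ≤ ∑ i ∈ s', f i :=
      Finset.sum_nonneg fun i hi => h0 i (Finset.mem_cons_of_mem hi)
    nlinarith [ih', mul_nonneg (sub_nonneg.2 ha1) hsum]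

/-- Geometric sum bound over `Icc 2 ℓ`. -/
lemma aux_sum_bound (x : ℝ) (hx : 2 ≤ x) (ℓ : ℕ) :
    ∑ j ∈ Finset.Icc 2 ℓ, (1 / x) ^ j ≤ 1 / (x * (x - 1)) := by
  have hx0 : (0:ℝ) < x := by linarith
  have hxx : (0:ℝ) < x * (x - 1) := by nlinarith
  have hr0 : (0:ℝ) ≤ 1 / x := by positivity
  have hr1 : (1:ℝ) / x < 1 := by
    rw [div_lt_one hx0]; linarith
  rcases lt_or_ge ℓ 2 with h | h
  · rw [Finset.Icc_eq_empty (by omega)]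
    simp only [Finset.sum_empty]
    positivity
  · have h1 : ∑ j ∈ Finset.range (ℓ + 1), (1 / x) ^ j
        = (∑ j ∈ Finset.Icc 2 ℓ, (1 / x) ^ j) + 1 + 1 / x := by
      have h01 : Finset.range (ℓ + 1) = insert 0 (insert 1 (Finset.Icc 2 ℓ)) := by
        ext j
        simp only [Finset.mem_range, Finset.mem_insert, Finset.mem_Icc]
        omega
      rw [h01, Finset.sum_insert, Finset.sum_insert]
      · ring
      · simp
      · simp only [Finset.mem_insert, Finset.mem_Icc]; omega
    have h2 : ∑ j ∈ Finset.range (ℓ + 1), (1 / x) ^ j ≤ 1 / (1 - 1 / x) := by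
      rw [geom_sum_eq (by linarith : (1:ℝ)/x ≠ 1)]
      have hpn : (0:ℝ) ≤ (1/x) ^ (ℓ + 1) := by positivity
      have hd : (0:ℝ) < 1 - 1/x := by linarith
      have e : ((1/x)^(ℓ+1) - 1)/((1/x) - 1) = (1 - (1/x)^(ℓ+1))/(1 - (1/x)) := by
        rw [← neg_div_neg_eq]; ring_nf
      rw [e]
      gcongr
      · linarith
    have h1x : x - 1 ≠ 0 := by linarith
    have key : 1 / (1 - 1 / x) - 1 - 1 / x = 1 / (x * (x - 1)) := by
      field_simp
      ring
    linarith
/-- `∏_{j=1}^ℓ (1 - x^{-j}) ≥ x/(x+6)` for `x ≥ 2`. -/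
lemma aux_prod_lower (x : ℝ) (hx : 2 ≤ x) (ℓ : ℕ) :
    x / (x + 6) ≤ ∏ j ∈ Finset.Icc 1 ℓ, (1 - (1 / x) ^ j) := by
  have hx0 : (0:ℝ) < x := by linarith
  have hxi : ∀ j : ℕ, 1 ≤ j → (1/x)^j ≤ 1/2 := by
    intro j hj
    calc (1/x)^j ≤ (1/x)^1 := by
          apply pow_le_pow_of_le_one (by positivity) (by rw [div_le_one hx0]; linarith) hj
      _ = 1/x := pow_one _
      _ ≤ 1/2 := by
          apply div_le_div_of_nonneg_left (by norm_num) (by norm_num) hx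
  rcases Nat.eq_zero_or_pos ℓ with rfl | hℓ
  · simp only [Finset.Icc_eq_empty (by omega : ¬ (1:ℕ) ≤ 0), Finset.prod_empty]
    rw [div_le_one (by linarith)]; linarith
  · have hsplit : Finset.Icc 1 ℓ = insert 1 (Finset.Icc 2 ℓ) := by
      ext j
      simp only [Finset.mem_insert, Finset.mem_Icc]
      omega
    rw [hsplit, Finset.prod_insert (by simp)]
    have htail : 1 - 1 / (x * (x - 1)) ≤ ∏ j ∈ Finset.Icc 2 ℓ, (1 - (1 / x) ^ j) := by
      have := aux_one_sub_sum_le_prod (Finset.Icc 2 ℓ) (fun j => (1/x)^j)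
        (fun i _ => by positivity)
        (fun i hi => by
          have := hxi i (by simp only [Finset.mem_Icc] at hi; omega)
          linarith)
      have hsum := aux_sum_bound x hx ℓ
      linarith
    have h1 : (0:ℝ) < x * (x - 1) := by nlinarith
    have h2 : 1 / (x * (x-1)) ≤ 1/2 := by
      apply div_le_div_of_nonneg_left (by norm_num) (by norm_num) (by nlinarith)
    have h3 : 0 ≤ 1 - 1 / (x * (x - 1)) := by linarith
    have h4 : 0 ≤ 1 - (1/x)^1 := by
      have := hxi 1 le_rfl; linarith
    calc x / (x + 6) ≤ (1 - (1/x)^1) * (1 - 1 / (x * (x-1))) := by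
          rw [div_le_iff₀ (by linarith)]
          have e1 : 1 - (1/x)^1 = (x - 1)/x := by
            rw [pow_one]; field_simp
          have e2 : 1 - 1 / (x * (x-1)) = (x*(x-1) - 1)/(x*(x-1)) := by
            rw [eq_div_iff h1.ne', sub_mul, one_div_mul_cancel h1.ne', one_mul]
          rw [e1, e2, div_mul_div_comm, ← sub_nonneg]
          have hd : (0:ℝ) < x * (x * (x-1)) := by nlinarith
          have hre : (x - 1) * (x * (x - 1) - 1) / (x * (x * (x - 1))) * (x + 6) - x
              = ((x - 1) * (x * (x - 1) - 1) * (x + 6) - x * (x * (x * (x-1)))) / (x * (x * (x-1))) := by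
            have hx1' : x - 1 ≠ 0 := by linarith
            field_simp
          rw [hre]
          apply div_nonneg _ hd.le
          nlinarith
      _ ≤ (1 - (1/x)^1) * ∏ j ∈ Finset.Icc 2 ℓ, (1 - (1 / x) ^ j) :=
          mul_le_mul_of_nonneg_left htail h4

/-- For any prime `p` and integers `k ≥ ℓ ≥ 0`, the Gaussian binomial coefficient
`[k choose ℓ]_p = ∏_{j=1}^{ℓ} (p^(k-ℓ+j) - 1)/(p^j - 1)` satisfies
`p^(ℓ(k-ℓ)) ≤ [k choose ℓ]_p ≤ p^(ℓ(k-ℓ)) (1 + 6/p)`. -/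
theorem gaussian_binomial_bounds (p k ℓ : ℕ) (hp : p.Prime) (hℓk : ℓ ≤ k) :
    (p : ℝ) ^ (ℓ * (k - ℓ))
        ≤ ∏ j ∈ Finset.Icc 1 ℓ, ((p : ℝ) ^ (k - ℓ + j) - 1) / ((p : ℝ) ^ j - 1) ∧
      ∏ j ∈ Finset.Icc 1 ℓ, ((p : ℝ) ^ (k - ℓ + j) - 1) / ((p : ℝ) ^ j - 1)
        ≤ (p : ℝ) ^ (ℓ * (k - ℓ)) * (1 + 6 / p) := by
  have hx : (2:ℝ) ≤ p := by exact_mod_cast hp.two_le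
  set x : ℝ := (p : ℝ) with hxdef
  have hx0 : (0:ℝ) < x := by linarith
  have hx1 : (1:ℝ) < x := by linarith
  set m := k - ℓ with hm
  have hden : ∀ j ∈ Finset.Icc 1 ℓ, (0:ℝ) < x ^ j - 1 := by
    intro j hj
    simp only [Finset.mem_Icc] at hj
    have : (1:ℝ) < x ^ j := one_lt_pow₀ hx1 (by omega)
    linarith
  have hpowm : (1:ℝ) ≤ x ^ m := one_le_pow₀ hx1.le
  have hprod_const : ∏ _j ∈ Finset.Icc 1 ℓ, x ^ m = x ^ (ℓ * m) := by
    rw [Finset.prod_const, Nat.card_Icc, ← pow_mul, Nat.add_sub_cancel, Nat.mul_comm]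
  constructor
  · calc x ^ (ℓ * m) = ∏ _j ∈ Finset.Icc 1 ℓ, x ^ m := hprod_const.symm
      _ ≤ ∏ j ∈ Finset.Icc 1 ℓ, (x ^ (m + j) - 1) / (x ^ j - 1) := by
          apply Finset.prod_le_prod (fun j _ => by positivity)
          intro j hj
          have hd := hden j hj
          rw [le_div_iff₀ hd]
          have : x ^ m * (x ^ j - 1) = x ^ (m + j) - x ^ m := by
            rw [pow_add]; ring
          rw [this]
          linarith
  · have step1 : ∏ j ∈ Finset.Icc 1 ℓ, (x ^ (m + j) - 1) / (x ^ j - 1)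
        ≤ ∏ j ∈ Finset.Icc 1 ℓ, (x ^ m * (x ^ j / (x ^ j - 1))) := by
      apply Finset.prod_le_prod
      · intro j hj
        have hd := hden j hj
        have hn : (0:ℝ) ≤ x ^ (m + j) - 1 := by
          have : (1:ℝ) ≤ x ^ (m + j) := one_le_pow₀ hx1.le
          linarith
        exact div_nonneg hn hd.le
      · intro j hj
        have hd := hden j hj
        rw [div_le_iff₀ hd, mul_assoc, div_mul_cancel₀ _ hd.ne', pow_add]
        have hpj : (0:ℝ) < x ^ j := by positivity
        nlinarith
    have step2 : ∏ j ∈ Finset.Icc 1 ℓ, (x ^ m * (x ^ j / (x ^ j - 1)))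
        = x ^ (ℓ * m) * ∏ j ∈ Finset.Icc 1 ℓ, (x ^ j / (x ^ j - 1)) := by
      rw [Finset.prod_mul_distrib, hprod_const]
    have step3 : ∏ j ∈ Finset.Icc 1 ℓ, (x ^ j / (x ^ j - 1)) ≤ 1 + 6 / x := by
      have hinv : ∏ j ∈ Finset.Icc 1 ℓ, (x ^ j / (x ^ j - 1))
          = (∏ j ∈ Finset.Icc 1 ℓ, ((x ^ j - 1) / x ^ j))⁻¹ := by
        rw [← Finset.prod_inv_distrib]
        apply Finset.prod_congr rfl
        intro j hj
        rw [inv_div]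
      have heq : ∀ j ∈ Finset.Icc 1 ℓ, (x ^ j - 1) / x ^ j = 1 - (1/x)^j := by
        intro j hj
        have hpj : (0:ℝ) < x ^ j := by positivity
        rw [div_pow, one_pow]
        field_simp
      rw [hinv, Finset.prod_congr rfl heq]
      have hlow := aux_prod_lower x hx ℓ
      have hpos : (0:ℝ) < x / (x + 6) := by positivity
      have hprodpos : (0:ℝ) < ∏ j ∈ Finset.Icc 1 ℓ, (1 - (1 / x) ^ j) :=
        lt_of_lt_of_le hpos hlow
      rw [inv_le_comm₀ hprodpos (by positivity : (0:ℝ) < 1 + 6/x)]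
      calc (1 + 6 / x)⁻¹ = x / (x + 6) := by
            rw [inv_eq_one_div]
            field_simp
        _ ≤ _ := hlow
    calc ∏ j ∈ Finset.Icc 1 ℓ, (x ^ (m + j) - 1) / (x ^ j - 1)
        ≤ x ^ (ℓ * m) * ∏ j ∈ Finset.Icc 1 ℓ, (x ^ j / (x ^ j - 1)) := by
          rw [← step2]; exact step1
      _ ≤ x ^ (ℓ * m) * (1 + 6 / x) :=
          mul_le_mul_of_nonneg_left step3 (by positivity)
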